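/- arXiv:2512.18529 — 4 statements merged into one kernel-verified Lean document; each statement's English description precedes it below -/
import Mathlib

section
/- Let Δ > 0, q ∈ ℝ, and ε > 0. Let p*(ε) = e^ε/(e^ε+1) and κ(ε) = (e^ε−1)/(e^ε+1). Suppose the input is a = q + r where r is uniformly distributed on [0, Δ], and the DP stochastic quantizer outputs, independently of everything else, the endpoint of the cell {q, q+Δ} nearest to a with probability p*(ε) and the farther endpoint with probability 1 − p*(ε) (with ties broken toward q). Then the mean squared error of the released value â satisfies E[(â − a)²] = (Δ²/12)·(4 − 3κ(ε)). -/
open Real MeasureTheory Set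

lemma poly_int (a b C D : ℝ) :
    ∫ r in a..b, (r ^ 2 + (C - D * r)) =
      (b ^ 3 / 3 + C * b - D * b ^ 2 / 2) - (a ^ 3 / 3 + C * a - D * a ^ 2 / 2) := by
  apply intervalIntegral.integral_eq_sub_of_hasDerivAt
  · intro x hx
    have h : HasDerivAt (fun r : ℝ => r ^ 3 / 3 + C * r - D * r ^ 2 / 2)
        ((3 * x ^ 2) / 3 + C * 1 - D * (2 * x ^ 1) / 2) x := by
      exact (((hasDerivAt_pow 3 x).div_const 3).add
        ((hasDerivAt_id x).const_mul C)).sub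
        (((hasDerivAt_pow 2 x).const_mul D).div_const 2)
    exact h.congr_deriv (by ring)
  · exact (Continuous.intervalIntegrable (u := fun r : ℝ => r ^ 2 + (C - D * r)) (by continuity) a b)

/-- **DP–SQ mean squared error.**
On the quantization cell `[q, q+Δ]`, the DP stochastic quantizer with privacy budget `ε`
releases the endpoint of `{q, q+Δ}` nearest to the input `a = q + r` with probability
`p*(ε) = e^ε/(e^ε+1)` (ties broken toward `q`), and the farther endpoint with probability
`1 - p*(ε)`, independently of the input randomness.  If `r` is uniformly distributed on
`[0, Δ]`, the mean squared error of the released value `â` (the expectation being the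
uniform average over `r` of the two-point expectation over the quantizer's coin) equals
`(Δ²/12)·(4 − 3κ(ε))`, where `κ(ε) = (e^ε−1)/(e^ε+1)`. -/
theorem dp_sq_mse (Δ q ε : ℝ) (hΔ : 0 < Δ) (hε : 0 < ε) :
    (∫ r in (0:ℝ)..Δ,
        ((Real.exp ε / (Real.exp ε + 1)) *
            ((if r ≤ Δ / 2 then q else q + Δ) - (q + r)) ^ 2 +
          (1 - Real.exp ε / (Real.exp ε + 1)) *
            ((if r ≤ Δ / 2 then q + Δ else q) - (q + r)) ^ 2)) / Δ
      = Δ ^ 2 / 12 * (4 - 3 * ((Real.exp ε - 1) / (Real.exp ε + 1))) := by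
  set p : ℝ := Real.exp ε / (Real.exp ε + 1) with hp
  set f : ℝ → ℝ := fun r =>
      p * ((if r ≤ Δ / 2 then q else q + Δ) - (q + r)) ^ 2 +
        (1 - p) * ((if r ≤ Δ / 2 then q + Δ else q) - (q + r)) ^ 2 with hf
  have he1 : Set.EqOn f (fun r => r ^ 2 + ((1 - p) * Δ ^ 2 - 2 * (1 - p) * Δ * r))
      (Set.uIcc 0 (Δ / 2)) := by
    intro r hr
    rw [Set.uIcc_of_le (by linarith)] at hr
    have : r ≤ Δ / 2 := hr.2
    simp only [hf, if_pos this]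
    
    ring
  have he2 : Set.EqOn f (fun r => r ^ 2 + (p * Δ ^ 2 - 2 * p * Δ * r))
      (Set.uIcc (Δ / 2) Δ) := by
    intro r hr
    rw [Set.uIcc_of_le (by linarith)] at hr
    simp only [hf]
    by_cases h : r ≤ Δ / 2
    · have hr2 : r = Δ / 2 := le_antisymm h hr.1
      simp only [if_pos h]
      rw [hr2]
      ring
    · simp only [if_neg h]
      ring
  have hi1 : IntervalIntegrable f volume 0 (Δ / 2) := by
    apply IntervalIntegrable.congr_ae
      (f := fun r => r ^ 2 + ((1 - p) * Δ ^ 2 - 2 * (1 - p) * Δ * r))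
    · exact Continuous.intervalIntegrable (by continuity) _ _
    · filter_upwards [ae_restrict_mem measurableSet_uIoc] with x hx
      exact (he1 (Set.uIoc_subset_uIcc hx)).symm
  have hi2 : IntervalIntegrable f volume (Δ / 2) Δ := by
    apply IntervalIntegrable.congr_ae
      (f := fun r => r ^ 2 + (p * Δ ^ 2 - 2 * p * Δ * r))
    · exact Continuous.intervalIntegrable (by continuity) _ _
    · filter_upwards [ae_restrict_mem measurableSet_uIoc] with x hx
      exact (he2 (Set.uIoc_subset_uIcc hx)).symm
  have hsplit := intervalIntegral.integral_add_adjacent_intervals hi1 hi2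
  have h1 : ∫ r in (0:ℝ)..(Δ/2), f r =
      ((Δ/2) ^ 3 / 3 + ((1 - p) * Δ ^ 2) * (Δ/2) - (2 * (1 - p) * Δ) * (Δ/2) ^ 2 / 2)
      - ((0:ℝ) ^ 3 / 3 + ((1 - p) * Δ ^ 2) * 0 - (2 * (1 - p) * Δ) * (0:ℝ) ^ 2 / 2) := by
    rw [intervalIntegral.integral_congr he1]
    exact poly_int 0 (Δ/2) ((1 - p) * Δ ^ 2) (2 * (1 - p) * Δ)
  have h2 : ∫ r in (Δ/2)..Δ, f r =
      (Δ ^ 3 / 3 + (p * Δ ^ 2) * Δ - (2 * p * Δ) * Δ ^ 2 / 2)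
      - ((Δ/2) ^ 3 / 3 + (p * Δ ^ 2) * (Δ/2) - (2 * p * Δ) * (Δ/2) ^ 2 / 2) := by
    rw [intervalIntegral.integral_congr he2]
    exact poly_int (Δ/2) Δ (p * Δ ^ 2) (2 * p * Δ)
  have hI : ∫ r in (0:ℝ)..Δ, f r = Δ ^ 3 / 12 * (7 - 6 * p) := by
    rw [← hsplit, h1, h2]; ring
  rw [show (∫ r in (0:ℝ)..Δ,
        ((Real.exp ε / (Real.exp ε + 1)) *
            ((if r ≤ Δ / 2 then q else q + Δ) - (q + r)) ^ 2 +
          (1 - Real.exp ε / (Real.exp ε + 1)) *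
            ((if r ≤ Δ / 2 then q + Δ else q) - (q + r)) ^ 2)) = ∫ r in (0:ℝ)..Δ, f r from rfl,
    hI, hp]
  have hE : Real.exp ε + 1 ≠ 0 := by positivity
  field_simp
  ring
end

section
/- Let Δ > 0, q ∈ ℝ, and ε > 0, and let p*(ε) = e^ε/(e^ε+1). For any two inputs a, a′ ∈ [q, q+Δ] and any output value x ∈ {q, q+Δ}, the DP stochastic quantizer M (which outputs the nearer endpoint with probability p*(ε) and the farther endpoint with probability 1−p*(ε)) satisfies Pr[M(a) = x] ≤ e^ε · Pr[M(a′) = x]. In particular the mechanism satisfies ε-differential privacy over inputs lying in a common quantization cell. -/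
/-- **ε-differential privacy of the DP stochastic quantizer.**
On the quantization cell `[q, q+Δ]` with `Δ > 0` and privacy budget `ε > 0`, the DP
stochastic quantizer `M` outputs the endpoint of `{q, q+Δ}` nearest to the input `a`
(ties broken toward `q`) with probability `p*(ε) = e^ε/(e^ε+1)`, and the farther endpoint
with probability `1 − p*(ε)`.  Here `M a x` denotes `Pr[M(a) = x]`.  Then for any two
inputs `a, a'` in the cell and any output value `x ∈ {q, q+Δ}`,
`Pr[M(a) = x] ≤ e^ε · Pr[M(a') = x]`; i.e. the mechanism is `ε`-differentially private
over inputs lying in a common quantization cell. -/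
theorem dp_sq_eps_dp (Δ q ε : ℝ) (hΔ : 0 < Δ) (hε : 0 < ε)
    (M : ℝ → ℝ → ℝ)
    (hM : ∀ a x : ℝ,
      M a x =
        if (if a - q ≤ (q + Δ) - a then q else q + Δ) = x
        then Real.exp ε / (Real.exp ε + 1)
        else 1 - Real.exp ε / (Real.exp ε + 1)) :
    ∀ a ∈ Set.Icc q (q + Δ), ∀ a' ∈ Set.Icc q (q + Δ),
      ∀ x ∈ ({q, q + Δ} : Set ℝ), M a x ≤ Real.exp ε * M a' x := by
  intro a _ a' _ x _
  rw [hM, hM]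
  have hE : (1:ℝ) ≤ Real.exp ε := by
    nlinarith [Real.add_one_le_exp ε]
  have hE1 : (0:ℝ) < Real.exp ε + 1 := by linarith
  have hrw : 1 - Real.exp ε / (Real.exp ε + 1) = 1 / (Real.exp ε + 1) := by
    field_simp
    ring
  have key1 : Real.exp ε / (Real.exp ε + 1) ≤
      Real.exp ε * (1 - Real.exp ε / (Real.exp ε + 1)) := by
    rw [hrw, mul_one_div]
  have key2 : 1 - Real.exp ε / (Real.exp ε + 1) ≤
      Real.exp ε * (Real.exp ε / (Real.exp ε + 1)) := by
    rw [hrw, ← mul_div_assoc, div_le_div_iff₀ hE1 hE1]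
    nlinarith
  have hp : 0 ≤ Real.exp ε / (Real.exp ε + 1) := by positivity
  have hq : 0 ≤ 1 - Real.exp ε / (Real.exp ε + 1) := by
    rw [sub_nonneg, div_le_one hE1]; linarith
  split_ifs <;> first | exact key1 | exact key2 | nlinarith
end

section
/- For ψ, φ₁, φ₂ ∈ ℝ define the unit beamforming vector v(ψ, φ₁, φ₂) = (cos ψ · e^{iφ₁}, sin ψ · e^{iφ₂}) ∈ ℂ². Then for any angles ψ, ψ′, φ₁, φ₁′, φ₂, φ₂′ ∈ ℝ, ‖v(ψ, φ₁, φ₂) − v(ψ′, φ₁′, φ₂′)‖² ≤ 8·( sin²((ψ − ψ′)/2) + sin²((φ₁ − φ₁′)/2) + sin²((φ₂ − φ₂′)/2) ). -/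
open Real Complex

/-- The IEEE 802.11 (`N_t = 2`, one spatial stream) beamforming vector reconstructed
from a Givens rotation angle `ψ` and per-antenna phase angles `φ₁, φ₂`:
`v(ψ, φ₁, φ₂) = (cos ψ · e^{iφ₁}, sin ψ · e^{iφ₂}) ∈ ℂ²`. -/
noncomputable def bfVec (ψ φ₁ φ₂ : ℝ) : EuclideanSpace ℂ (Fin 2) :=
  WithLp.toLp 2 ![(Real.cos ψ : ℂ) * Complex.exp (φ₁ * Complex.I),
    (Real.sin ψ : ℂ) * Complex.exp (φ₂ * Complex.I)]

/-- `|e^{ia} - e^{ib}| = 2|sin((a-b)/2)|`. -/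
lemma exp_diff_abs (a b : ℝ) :
    ‖Complex.exp (a * Complex.I) - Complex.exp (b * Complex.I)‖ =
      2 * |Real.sin ((a - b) / 2)| := by
  have h : Complex.exp (a * Complex.I) - Complex.exp (b * Complex.I) =
      Complex.exp (((a + b) / 2 : ℝ) * Complex.I) *
        (Complex.exp (((a - b) / 2 : ℝ) * Complex.I) -
          Complex.exp ((-((a - b) / 2) : ℝ) * Complex.I)) := by
    rw [mul_sub, ← Complex.exp_add, ← Complex.exp_add]
    push_cast
    ring_nf
  have e : ∀ x : ℂ, Complex.cos x + Complex.sin x * Complex.I -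
      (Complex.cos (-x) + Complex.sin (-x) * Complex.I) = 2 * Complex.sin x * Complex.I := by
    intro x; rw [Complex.cos_neg, Complex.sin_neg]; ring
  rw [h, norm_mul, Complex.norm_exp_ofReal_mul_I, one_mul, Complex.exp_mul_I,
    Complex.exp_mul_I, Complex.ofReal_neg, e, ← Complex.ofReal_sin]
  rw [show (2 : ℂ) * (Real.sin ((a - b) / 2) : ℂ) * Complex.I =
      ((2 * Real.sin ((a - b) / 2) : ℝ) : ℂ) * Complex.I by push_cast; ring]
  rw [norm_mul, Complex.norm_I, mul_one, Complex.norm_real, Real.norm_eq_abs, abs_mul]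
  simp

/-- Componentwise bound: `|c e^{ia} - c' e^{ia'}|² ≤ 2(c-c')² + 8 sin²((a-a')/2)` when `|c'| ≤ 1`. -/
lemma comp_sq_le (c c' a a' : ℝ) (hc : |c'| ≤ 1) :
    ‖(c : ℂ) * Complex.exp (a * Complex.I) -
      (c' : ℂ) * Complex.exp (a' * Complex.I)‖ ^ 2 ≤
      2 * (c - c') ^ 2 + 8 * Real.sin ((a - a') / 2) ^ 2 := by
  have hd : (c : ℂ) * Complex.exp (a * Complex.I) - (c' : ℂ) * Complex.exp (a' * Complex.I) =
      ((c : ℂ) - c') * Complex.exp (a * Complex.I) +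
        (c' : ℂ) * (Complex.exp (a * Complex.I) - Complex.exp (a' * Complex.I)) := by ring
  have key : ‖(c : ℂ) * Complex.exp (a * Complex.I) -
      (c' : ℂ) * Complex.exp (a' * Complex.I)‖ ≤ |c - c'| + 2 * |Real.sin ((a - a') / 2)| := by
    rw [hd]
    refine le_trans (norm_add_le _ _) ?_
    rw [norm_mul, norm_mul, Complex.norm_exp_ofReal_mul_I, mul_one, exp_diff_abs,
      Complex.norm_real, Real.norm_eq_abs, ← Complex.ofReal_sub, Complex.norm_real, Real.norm_eq_abs]
    have h1 : |c'| * (2 * |Real.sin ((a - a') / 2)|) ≤ 1 * (2 * |Real.sin ((a - a') / 2)|) :=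
      mul_le_mul_of_nonneg_right hc (by positivity)
    nlinarith [abs_sub_comm c c']
  have hA : (0:ℝ) ≤ ‖(c : ℂ) * Complex.exp (a * Complex.I) -
      (c' : ℂ) * Complex.exp (a' * Complex.I)‖ := norm_nonneg _
  nlinarith [sq_nonneg (|c - c'| - 2 * |Real.sin ((a - a') / 2)|), _root_.sq_abs (c - c'),
    _root_.sq_abs (Real.sin ((a - a') / 2)), abs_nonneg (c - c'),
    abs_nonneg (Real.sin ((a - a') / 2))]

/-- **Angular perturbation bound on the beamforming vector.**
For any angles `ψ, ψ', φ₁, φ₁', φ₂, φ₂' ∈ ℝ`,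
`‖v(ψ,φ₁,φ₂) − v(ψ',φ₁',φ₂')‖² ≤ 8·(sin²((ψ−ψ')/2) + sin²((φ₁−φ₁')/2) + sin²((φ₂−φ₂')/2))`. -/
theorem bfVec_dist_sq_le (ψ ψ' φ₁ φ₁' φ₂ φ₂' : ℝ) :
    ‖bfVec ψ φ₁ φ₂ - bfVec ψ' φ₁' φ₂'‖ ^ 2 ≤
      8 * (Real.sin ((ψ - ψ') / 2) ^ 2 + Real.sin ((φ₁ - φ₁') / 2) ^ 2 +
        Real.sin ((φ₂ - φ₂') / 2) ^ 2) := by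
  have hn : ‖bfVec ψ φ₁ φ₂ - bfVec ψ' φ₁' φ₂'‖ ^ 2 =
      ‖(Real.cos ψ : ℂ) * Complex.exp (φ₁ * Complex.I) -
        (Real.cos ψ' : ℂ) * Complex.exp (φ₁' * Complex.I)‖ ^ 2 +
      ‖(Real.sin ψ : ℂ) * Complex.exp (φ₂ * Complex.I) -
        (Real.sin ψ' : ℂ) * Complex.exp (φ₂' * Complex.I)‖ ^ 2 := by
    rw [EuclideanSpace.norm_eq, Real.sq_sqrt (by positivity)]
    simp [bfVec, Fin.sum_univ_two]
  rw [hn]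
  have h1 := comp_sq_le (Real.cos ψ) (Real.cos ψ') φ₁ φ₁' (abs_cos_le_one ψ')
  have h2 := comp_sq_le (Real.sin ψ) (Real.sin ψ') φ₂ φ₂' (abs_sin_le_one ψ')
  have hc : Real.cos ψ - Real.cos ψ' =
      -2 * Real.sin ((ψ + ψ') / 2) * Real.sin ((ψ - ψ') / 2) := Real.cos_sub_cos ψ ψ'
  have hs : Real.sin ψ - Real.sin ψ' =
      2 * Real.sin ((ψ - ψ') / 2) * Real.cos ((ψ + ψ') / 2) := Real.sin_sub_sin ψ ψ'
  have hpy := Real.sin_sq_add_cos_sq ((ψ + ψ') / 2)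
  have h8 : 2 * (Real.cos ψ - Real.cos ψ') ^ 2 + 2 * (Real.sin ψ - Real.sin ψ') ^ 2 =
      8 * Real.sin ((ψ - ψ') / 2) ^ 2 := by
    rw [hc, hs]
    linear_combination 8 * Real.sin ((ψ - ψ') / 2) ^ 2 * hpy
  linarith [h1, h2, h8]
end

section
/- For ψ, φ₁, φ₂ ∈ ℝ let v(ψ, φ₁, φ₂) = (cos ψ · e^{iφ₁}, sin ψ · e^{iφ₂}) ∈ ℂ². Let ψ̂, φ̂₁, φ̂₂ be random angles satisfying E[(ψ̂ − ψ)²] ≤ σ_ψ², E[(φ̂₁ − φ₁)²] ≤ σ_φ², and E[(φ̂₂ − φ₂)²] ≤ σ_φ². Then the expected squared chordal distance between the true and privatized one-dimensional beamforming subspaces satisfies E[ 1 − |⟨v(ψ, φ₁, φ₂), v(ψ̂, φ̂₁, φ̂₂)⟩|² ] ≤ 2·(σ_ψ² + 2σ_φ²). -/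
open Real Complex MeasureTheory

lemma bfVec_norm (ψ φ₁ φ₂ : ℝ) : ‖bfVec ψ φ₁ φ₂‖ = 1 := by
  have h : ∀ (a t : ℝ), ‖(a : ℂ) * Complex.exp (t * Complex.I)‖ = |a| := by
    intro a t
    rw [norm_mul, Complex.norm_real, Real.norm_eq_abs,
      Complex.norm_exp_ofReal_mul_I, mul_one]
  rw [EuclideanSpace.norm_eq]
  simp only [bfVec, PiLp.toLp_apply, Fin.sum_univ_two, Matrix.cons_val_zero, Matrix.cons_val_one,
    Matrix.head_cons, h]
  rw [_root_.sq_abs, _root_.sq_abs, Real.cos_sq_add_sin_sq, Real.sqrt_one]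

lemma bfVec_re (ψ φ₁ φ₂ ψ' φ₁' φ₂' : ℝ) :
    (inner ℂ (bfVec ψ φ₁ φ₂) (bfVec ψ' φ₁' φ₂') : ℂ).re =
      Real.cos ψ * Real.cos ψ' * Real.cos (φ₁' - φ₁)
        + Real.sin ψ * Real.sin ψ' * Real.cos (φ₂' - φ₂) := by
  simp [bfVec, PiLp.inner_apply, Fin.sum_univ_two, Complex.exp_mul_I, RCLike.inner_apply,
    map_mul, Complex.ext_iff, Real.cos_sub, Real.sin_sub,
    Complex.cos_ofReal_re, Complex.sin_ofReal_re, Complex.cos_ofReal_im, Complex.sin_ofReal_im]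
  ring

lemma bfVec_chordal_nonneg (ψ φ₁ φ₂ ψ' φ₁' φ₂' : ℝ) :
    0 ≤ 1 - ‖(inner ℂ (bfVec ψ φ₁ φ₂) (bfVec ψ' φ₁' φ₂') : ℂ)‖ ^ 2 := by
  have h := norm_inner_le_norm (𝕜 := ℂ) (bfVec ψ φ₁ φ₂) (bfVec ψ' φ₁' φ₂')
  rw [bfVec_norm, bfVec_norm, mul_one] at h
  nlinarith [norm_nonneg (inner (𝕜 := ℂ) (bfVec ψ φ₁ φ₂) (bfVec ψ' φ₁' φ₂'))]

lemma bfVec_chordal_le (ψ φ₁ φ₂ ψ' φ₁' φ₂' : ℝ) :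
    1 - ‖(inner ℂ (bfVec ψ φ₁ φ₂) (bfVec ψ' φ₁' φ₂') : ℂ)‖ ^ 2 ≤
      2 * ((ψ' - ψ) ^ 2 + (φ₁' - φ₁) ^ 2 + (φ₂' - φ₂) ^ 2) := by
  set z : ℂ := inner ℂ (bfVec ψ φ₁ φ₂) (bfVec ψ' φ₁' φ₂') with hz
  have hre : z.re ≤ ‖z‖ := by exact Complex.re_le_norm z
  have hval := bfVec_re ψ φ₁ φ₂ ψ' φ₁' φ₂'
  rw [← hz] at hval
  have h0 : Real.cos ψ' * Real.cos ψ + Real.sin ψ' * Real.sin ψ = Real.cos (ψ' - ψ) :=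
    (Real.cos_sub ψ' ψ).symm
  have hc0 : 1 - (ψ' - ψ) ^ 2 / 2 ≤ Real.cos (ψ' - ψ) := Real.one_sub_sq_div_two_le_cos
  have hc1 : 1 - (φ₁' - φ₁) ^ 2 / 2 ≤ Real.cos (φ₁' - φ₁) := Real.one_sub_sq_div_two_le_cos
  have hc2 : 1 - (φ₂' - φ₂) ^ 2 / 2 ≤ Real.cos (φ₂' - φ₂) := Real.one_sub_sq_div_two_le_cos
  have hu1 : Real.cos (φ₁' - φ₁) ≤ 1 := Real.cos_le_one _
  have hu2 : Real.cos (φ₂' - φ₂) ≤ 1 := Real.cos_le_one _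
  have hp1 : Real.cos ψ * Real.cos ψ' ≤ 1 := by
    nlinarith [Real.neg_one_le_cos ψ, Real.cos_le_one ψ, Real.neg_one_le_cos ψ',
      Real.cos_le_one ψ']
  have hp2 : Real.sin ψ * Real.sin ψ' ≤ 1 := by
    nlinarith [Real.neg_one_le_sin ψ, Real.sin_le_one ψ, Real.neg_one_le_sin ψ',
      Real.sin_le_one ψ']
  have he1 : Real.cos ψ * Real.cos ψ' * (1 - Real.cos (φ₁' - φ₁)) ≤ 1 - Real.cos (φ₁' - φ₁) := by
    nlinarith
  have he2 : Real.sin ψ * Real.sin ψ' * (1 - Real.cos (φ₂' - φ₂)) ≤ 1 - Real.cos (φ₂' - φ₂) := by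
    nlinarith
  have hRe : 2 - 2 * z.re ≤ (ψ' - ψ) ^ 2 + (φ₁' - φ₁) ^ 2 + (φ₂' - φ₂) ^ 2 := by
    rw [hval]; nlinarith
  nlinarith [sq_nonneg (‖z‖ - 1)]

/-- **Expected squared chordal distance of the privatized beamforming subspace.**
If the random angles `ψ̂, φ̂₁, φ̂₂` satisfy `E[(ψ̂−ψ)²] ≤ σ_ψ²`, `E[(φ̂₁−φ₁)²] ≤ σ_φ²`,
`E[(φ̂₂−φ₂)²] ≤ σ_φ²`, then the expected squared chordal distance between the true and
privatized one-dimensional beamforming subspaces satisfies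
`E[1 − |⟨v(ψ,φ₁,φ₂), v(ψ̂,φ̂₁,φ̂₂)⟩|²] ≤ 2·(σ_ψ² + 2σ_φ²)`. -/
theorem bfVec_expected_chordal_le {Ω : Type*} [MeasurableSpace Ω]
    (μ : Measure Ω) [IsProbabilityMeasure μ]
    (ψ φ₁ φ₂ σψ σφ : ℝ) (ψh φ₁h φ₂h : Ω → ℝ)
    (hmψ : AEMeasurable ψh μ) (hmφ₁ : AEMeasurable φ₁h μ) (hmφ₂ : AEMeasurable φ₂h μ)
    (hiψ : Integrable (fun ω => (ψh ω - ψ) ^ 2) μ)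
    (hiφ₁ : Integrable (fun ω => (φ₁h ω - φ₁) ^ 2) μ)
    (hiφ₂ : Integrable (fun ω => (φ₂h ω - φ₂) ^ 2) μ)
    (hψ : ∫ ω, (ψh ω - ψ) ^ 2 ∂μ ≤ σψ ^ 2)
    (hφ₁ : ∫ ω, (φ₁h ω - φ₁) ^ 2 ∂μ ≤ σφ ^ 2)
    (hφ₂ : ∫ ω, (φ₂h ω - φ₂) ^ 2 ∂μ ≤ σφ ^ 2) :
    ∫ ω, (1 - ‖(inner ℂ (bfVec ψ φ₁ φ₂) (bfVec (ψh ω) (φ₁h ω) (φ₂h ω)) : ℂ)‖ ^ 2) ∂μ ≤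
      2 * (σψ ^ 2 + 2 * σφ ^ 2) := by
  have hgint : Integrable
      (fun ω => 2 * ((ψh ω - ψ) ^ 2 + (φ₁h ω - φ₁) ^ 2 + (φ₂h ω - φ₂) ^ 2)) μ :=
    ((hiψ.add hiφ₁).add hiφ₂).const_mul 2
  have hmono : ∫ ω, (1 - ‖(inner ℂ (bfVec ψ φ₁ φ₂) (bfVec (ψh ω) (φ₁h ω) (φ₂h ω)) : ℂ)‖ ^ 2) ∂μ ≤
      ∫ ω, 2 * ((ψh ω - ψ) ^ 2 + (φ₁h ω - φ₁) ^ 2 + (φ₂h ω - φ₂) ^ 2) ∂μ := by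
    refine integral_mono_of_nonneg (ae_of_all _ fun ω => ?_) hgint (ae_of_all _ fun ω => ?_)
    · exact bfVec_chordal_nonneg ψ φ₁ φ₂ (ψh ω) (φ₁h ω) (φ₂h ω)
    · exact bfVec_chordal_le ψ φ₁ φ₂ (ψh ω) (φ₁h ω) (φ₂h ω)
  have heq : ∫ ω, 2 * ((ψh ω - ψ) ^ 2 + (φ₁h ω - φ₁) ^ 2 + (φ₂h ω - φ₂) ^ 2) ∂μ =
      2 * ((∫ ω, (ψh ω - ψ) ^ 2 ∂μ) + (∫ ω, (φ₁h ω - φ₁) ^ 2 ∂μ) + ∫ ω, (φ₂h ω - φ₂) ^ 2 ∂μ) := by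
    have h12 : Integrable (fun ω => (ψh ω - ψ) ^ 2 + (φ₁h ω - φ₁) ^ 2) μ := hiψ.add hiφ₁
    have e2 : (∫ ω, ((ψh ω - ψ) ^ 2 + (φ₁h ω - φ₁) ^ 2) ∂μ) =
        (∫ ω, (ψh ω - ψ) ^ 2 ∂μ) + ∫ ω, (φ₁h ω - φ₁) ^ 2 ∂μ := integral_add hiψ hiφ₁
    have e3 : (∫ ω, (((ψh ω - ψ) ^ 2 + (φ₁h ω - φ₁) ^ 2) + (φ₂h ω - φ₂) ^ 2) ∂μ) =
        (∫ ω, ((ψh ω - ψ) ^ 2 + (φ₁h ω - φ₁) ^ 2) ∂μ) + ∫ ω, (φ₂h ω - φ₂) ^ 2 ∂μ :=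
      integral_add h12 hiφ₂
    rw [integral_const_mul, e3, e2]
  rw [heq] at hmono
  linarith
end
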